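/- Let m ≥ 2, b > 1, δ > 1. Define x_i = δ·b^{im} and y_i = ∑_{j=1}^{m-1} b^{im+j}. Then sup_{i≥0} (x_i + 2∑_{j=0}^{i}(x_j + y_j))/x_i = 1 + 2·b^m/(b^m - 1) + (2/δ)·((b^m - b)/(b-1))·(b^m/(b^m - 1)). -/

import Mathlib

open Finset

theorem biased_search_consistency (m : ℕ) (hm : 2 ≤ m) (b δ : ℝ) (hb : 1 < b)
    (hδ : 1 < δ) :
    (⨆ i : ℕ,
        ((δ * b ^ (i * m) + 2 * ∑ j ∈ Finset.range (i + 1),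
            (δ * b ^ (j * m) + ∑ l ∈ Finset.Icc 1 (m - 1), b ^ (j * m + l))) /
          (δ * b ^ (i * m))))
      = 1 + 2 * b ^ m / (b ^ m - 1)
        + (2 / δ) * ((b ^ m - b) / (b - 1)) * (b ^ m / (b ^ m - 1)) := by
  have hb0 : (0:ℝ) < b := lt_trans one_pos hb
  have hb1 : b - 1 ≠ 0 := sub_ne_zero.2 (ne_of_gt hb)
  have hm1 : 1 ≤ m := le_trans one_le_two hm
  have hA : 1 < b ^ m := one_lt_pow₀ hb (by omega)
  have hA0 : (0:ℝ) < b ^ m := lt_trans one_pos hA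
  have hAne : b ^ m - 1 ≠ 0 := sub_ne_zero.2 (ne_of_gt hA)
  have hδ0 : (0:ℝ) < δ := lt_trans one_pos hδ
  -- value of c
  have hc : (∑ l ∈ Finset.Icc 1 (m - 1), b ^ l) = (b ^ m - b) / (b - 1) := by
    have h1 : Finset.Icc 1 (m - 1) = Finset.Ico 1 m := by
      rw [← Finset.Ico_add_one_right_eq_Icc]; congr 1; omega
    rw [h1, geom_sum_Ico (ne_of_gt hb) hm1, pow_one]
  set c : ℝ := (b ^ m - b) / (b - 1) with hcdef
  have hc0 : 0 ≤ c := by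
    apply div_nonneg _ (by linarith)
    have : b ≤ b ^ m := by
      calc b = b ^ 1 := (pow_one b).symm
      _ ≤ b ^ m := pow_le_pow_right₀ (le_of_lt hb) hm1
    linarith
  set K : ℝ := 2 * (δ + c) / (δ * (b ^ m - 1)) with hKdef
  have hK0 : 0 ≤ K := by
    exact div_nonneg (by linarith) (le_of_lt (mul_pos hδ0 (by linarith)))
  set L : ℝ := 1 + K * b ^ m with hLdef
  -- key pointwise identity
  have key : ∀ i : ℕ,
      ((δ * b ^ (i * m) + 2 * ∑ j ∈ Finset.range (i + 1),
          (δ * b ^ (j * m) + ∑ l ∈ Finset.Icc 1 (m - 1), b ^ (j * m + l))) /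
        (δ * b ^ (i * m))) = L - K * ((b ^ m)⁻¹) ^ i := by
    intro i
    have hsum : (∑ j ∈ Finset.range (i + 1),
        (δ * b ^ (j * m) + ∑ l ∈ Finset.Icc 1 (m - 1), b ^ (j * m + l)))
        = (δ + c) * (((b ^ m) ^ (i + 1) - 1) / (b ^ m - 1)) := by
      have h1 : ∀ j ∈ Finset.range (i + 1),
          (δ * b ^ (j * m) + ∑ l ∈ Finset.Icc 1 (m - 1), b ^ (j * m + l))
          = (δ + c) * (b ^ m) ^ j := by
        intro j _
        have h2 : (∑ l ∈ Finset.Icc 1 (m - 1), b ^ (j * m + l))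
            = b ^ (j * m) * c := by
          rw [← hc, Finset.mul_sum]
          exact Finset.sum_congr rfl fun l _ => pow_add b (j*m) l
        rw [h2]
        have h3 : b ^ (j * m) = (b ^ m) ^ j := by
          rw [mul_comm, pow_mul]
        rw [h3]; ring
      rw [Finset.sum_congr rfl h1, ← Finset.mul_sum, geom_sum_eq (ne_of_gt hA)]
    rw [hsum]
    have h3 : b ^ (i * m) = (b ^ m) ^ i := by rw [mul_comm, pow_mul]
    rw [h3, hLdef, hKdef]
    have hpow : ((b:ℝ) ^ m) ^ i ≠ 0 := by positivity
    rw [inv_pow]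
    field_simp
    ring
  rw [show (⨆ i : ℕ,
        ((δ * b ^ (i * m) + 2 * ∑ j ∈ Finset.range (i + 1),
            (δ * b ^ (j * m) + ∑ l ∈ Finset.Icc 1 (m - 1), b ^ (j * m + l))) /
          (δ * b ^ (i * m)))) = ⨆ i : ℕ, (L - K * ((b ^ m)⁻¹) ^ i) from
    iSup_congr key]
  have hr0 : (0:ℝ) ≤ (b ^ m)⁻¹ := by positivity
  have hr1 : (b ^ m)⁻¹ < 1 := inv_lt_one_of_one_lt₀ hA
  have hmono : Monotone (fun i : ℕ => L - K * ((b ^ m)⁻¹) ^ i) := by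
    intro i j hij
    simp only
    have : ((b ^ m)⁻¹) ^ j ≤ ((b ^ m)⁻¹) ^ i :=
      pow_le_pow_of_le_one hr0 (le_of_lt hr1) hij
    nlinarith
  have htend : Filter.Tendsto (fun i : ℕ => L - K * ((b ^ m)⁻¹) ^ i)
      Filter.atTop (nhds L) := by
    have h0 : Filter.Tendsto (fun i : ℕ => ((b ^ m)⁻¹) ^ i)
        Filter.atTop (nhds 0) :=
      tendsto_pow_atTop_nhds_zero_of_lt_one hr0 hr1
    have := Filter.Tendsto.const_sub L ((h0.const_mul K))
    simpa using this
  have hbdd : BddAbove (Set.range (fun i : ℕ => L - K * ((b ^ m)⁻¹) ^ i)) := by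
    refine ⟨L, Set.forall_mem_range.2 fun i => ?_⟩
    have : 0 ≤ K * ((b ^ m)⁻¹) ^ i := mul_nonneg hK0 (by positivity)
    linarith
  rw [tendsto_nhds_unique (tendsto_atTop_ciSup hmono hbdd) htend]
  rw [hLdef, hKdef, hcdef]
  field_simp
  ring
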